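/- Let (λ_n) be an increasing sequence of positive real numbers tending to +∞ such that λ_{n+1}/λ_n → 1 as n → ∞. Then (λ_n) has property (SG). -/

import Mathlib

/-- an increasing sequence of positive reals tending to `+∞` with
`λ_{n+1}/λ_n → 1` has property (SG). -/
theorem stmt_11 (lam : ℕ → ℝ) (hpos : ∀ n, 0 < lam n) (hmono : StrictMono lam)
    (htop : Filter.Tendsto lam Filter.atTop Filter.atTop)
    (hratio : Filter.Tendsto (fun n => lam (n + 1) / lam n) Filter.atTop (nhds 1)) :
    ∀ B : ℝ, 0 < B → ∃ ρ : ℝ, 1 < ρ ∧ ∃ φ : ℕ → ℕ, StrictMono φ ∧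
      (∀ n, ρ * lam (φ n) ≤ lam (φ (n + 1))) ∧
      ∀ n₀ : ℕ, B / lam (φ n₀) < ∑' n : {m : ℕ // n₀ < m}, (lam (φ n.1))⁻¹ := by
  classical
  intro B hB
  set s : ℝ := 1 + (2 * B)⁻¹ with hs_def
  have hs1 : 1 < s := by
    have h2 : 0 < (2 * B)⁻¹ := by positivity
    rw [hs_def]; linarith
  have hs0 : 0 ≤ s := by linarith
  set ρ : ℝ := Real.sqrt s with hρ_def
  have hρ2 : ρ ^ 2 = s := Real.sq_sqrt hs0
  have hρ1 : 1 < ρ := by nlinarith [Real.sqrt_nonneg s]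
  have hρ0 : 0 < ρ := by linarith
  obtain ⟨N, hN⟩ := Filter.eventually_atTop.mp (hratio.eventually_lt_const hρ1)
  have hstep : ∀ m, N ≤ m → lam (m + 1) ≤ ρ * lam m := by
    intro m hm
    have h1 := hN m hm
    have h2 := (div_lt_iff₀ (hpos m)).mp h1
    linarith
  have key : ∀ a : ℕ, ∃ m, a < m ∧ ρ * lam a ≤ lam m := by
    intro a
    obtain ⟨m₀, hm₀⟩ := (Filter.tendsto_atTop.mp htop (ρ * lam a)).exists_forall_of_atTop
    exact ⟨max (a + 1) m₀, lt_of_lt_of_le (Nat.lt_succ_self a) (le_max_left _ _),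
      hm₀ _ (le_max_right _ _)⟩
  set φ : ℕ → ℕ := fun n => Nat.rec N (fun _ p => Nat.find (key p)) n with hφ_def
  have hφsucc : ∀ n, φ (n + 1) = Nat.find (key (φ n)) := fun n => rfl
  have hφlt : ∀ n, φ n < φ (n + 1) := by
    intro n; rw [hφsucc]; exact (Nat.find_spec (key (φ n))).1
  have hφmono : StrictMono φ := strictMono_nat_of_lt_succ hφlt
  have hge : ∀ n, ρ * lam (φ n) ≤ lam (φ (n + 1)) := by
    intro n; rw [hφsucc]; exact (Nat.find_spec (key (φ n))).2
  have hφN : ∀ n, N ≤ φ n := by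
    intro n
    calc N = φ 0 := rfl
    _ ≤ φ n := hφmono.monotone (Nat.zero_le n)
  have hub : ∀ n, lam (φ (n + 1)) ≤ s * lam (φ n) := by
    intro n
    have hm1 : φ n < φ (n + 1) := hφlt n
    have hprev : lam (φ (n + 1) - 1) < ρ * lam (φ n) := by
      rcases Nat.lt_or_ge (φ n) (φ (n + 1) - 1) with h | h
      · have hlt : φ (n + 1) - 1 < Nat.find (key (φ n)) := by
          rw [← hφsucc n]; omega
        have hmin := Nat.find_min (key (φ n)) hlt
        push_neg at hmin
        exact hmin h
      · have hle : φ (n + 1) - 1 = φ n := by omega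
        rw [hle]
        nlinarith [hpos (φ n)]
    have hNm : N ≤ φ (n + 1) - 1 := le_trans (hφN n) (by omega)
    have h2 : lam (φ (n + 1)) ≤ ρ * lam (φ (n + 1) - 1) := by
      have h3 := hstep (φ (n + 1) - 1) hNm
      rwa [Nat.sub_add_cancel (by omega)] at h3
    nlinarith [hpos (φ n), hpos (φ (n + 1) - 1)]
  have hubk : ∀ n k, lam (φ (n + k)) ≤ s ^ k * lam (φ n) := by
    intro n k
    induction k with
    | zero => simp
    | succ k ih =>
      have h1 : n + (k + 1) = (n + k) + 1 := by omega
      rw [h1]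
      calc lam (φ ((n + k) + 1)) ≤ s * lam (φ (n + k)) := hub (n + k)
      _ ≤ s * (s ^ k * lam (φ n)) := by nlinarith
      _ = s ^ (k + 1) * lam (φ n) := by ring
  have hlbk : ∀ n k, ρ ^ k * lam (φ n) ≤ lam (φ (n + k)) := by
    intro n k
    induction k with
    | zero => simp
    | succ k ih =>
      have h1 : n + (k + 1) = (n + k) + 1 := by omega
      rw [h1]
      calc ρ ^ (k + 1) * lam (φ n) = ρ * (ρ ^ k * lam (φ n)) := by ring
      _ ≤ ρ * lam (φ (n + k)) := by nlinarith [pow_pos hρ0 k, hpos (φ n)]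
      _ ≤ lam (φ ((n + k) + 1)) := hge (n + k)
  refine ⟨ρ, hρ1, φ, hφmono, hge, ?_⟩
  intro n₀
  let e : ℕ ≃ {m : ℕ // n₀ < m} :=
    { toFun := fun k => ⟨n₀ + 1 + k, by omega⟩
      invFun := fun m => m.1 - n₀ - 1
      left_inv := fun k => by show n₀ + 1 + k - n₀ - 1 = k; omega
      right_inv := fun m => Subtype.ext (by
        have := m.2
        show n₀ + 1 + (m.1 - n₀ - 1) = m.1
        omega) }
  have hfs : Summable (fun k : ℕ => (lam (φ (n₀ + 1 + k)))⁻¹) := by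
    refine Summable.of_nonneg_of_le (f := fun k : ℕ => (lam (φ (n₀ + 1)))⁻¹ * ρ⁻¹ ^ k)
      (fun k => (inv_pos.mpr (hpos _)).le) (fun k => ?_)
      ((summable_geometric_of_lt_one (by positivity) (inv_lt_one_of_one_lt₀ hρ1)).mul_left _)
    have h1 := hlbk (n₀ + 1) k
    calc (lam (φ (n₀ + 1 + k)))⁻¹ ≤ (ρ ^ k * lam (φ (n₀ + 1)))⁻¹ :=
          inv_anti₀ (mul_pos (pow_pos hρ0 k) (hpos _)) h1
    _ = (lam (φ (n₀ + 1)))⁻¹ * ρ⁻¹ ^ k := by rw [mul_inv, inv_pow]; ring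
  set r : ℝ := s⁻¹ with hr_def
  have hsne : s ≠ 0 := by positivity
  have hμ : 0 < lam (φ n₀) := hpos _
  have hr0 : 0 < r := by rw [hr_def]; positivity
  have hr1 : r < 1 := by rw [hr_def]; exact inv_lt_one_of_one_lt₀ hs1
  have hgs : Summable (fun k : ℕ => r / lam (φ n₀) * r ^ k) :=
    (summable_geometric_of_lt_one hr0.le hr1).mul_left _
  have hle : ∀ k : ℕ, r / lam (φ n₀) * r ^ k ≤ (lam (φ (n₀ + 1 + k)))⁻¹ := by
    intro k
    have h1 : lam (φ (n₀ + 1 + k)) ≤ s ^ (k + 1) * lam (φ n₀) := by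
      have h2 := hubk n₀ (k + 1)
      have h3 : n₀ + (k + 1) = n₀ + 1 + k := by omega
      rwa [h3] at h2
    have heq : r / lam (φ n₀) * r ^ k = (s ^ (k + 1) * lam (φ n₀))⁻¹ := by
      rw [hr_def]
      field_simp
      rw [pow_succ, ← mul_assoc, ← mul_pow, one_div, inv_mul_cancel₀ hsne, one_pow, one_mul]
    rw [heq]
    exact inv_anti₀ (hpos _) h1
  have hsum : ∑' k : ℕ, r / lam (φ n₀) * r ^ k = 2 * B / lam (φ n₀) := by
    rw [tsum_mul_left, tsum_geometric_of_lt_one hr0.le hr1]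
    have h1r : 1 - r = (2 * B)⁻¹ / s := by
      rw [hr_def, hs_def]
      field_simp
      ring
    rw [h1r, hr_def]
    field_simp
  have main : B / lam (φ n₀) < ∑' k : ℕ, (lam (φ (n₀ + 1 + k)))⁻¹ := by
    calc B / lam (φ n₀) < 2 * B / lam (φ n₀) := by
          rw [div_lt_div_iff₀ hμ hμ]; nlinarith
    _ = ∑' k : ℕ, r / lam (φ n₀) * r ^ k := hsum.symm
    _ ≤ ∑' k : ℕ, (lam (φ (n₀ + 1 + k)))⁻¹ := Summable.tsum_le_tsum hle hgs hfs
  calc B / lam (φ n₀) < ∑' k : ℕ, (lam (φ (n₀ + 1 + k)))⁻¹ := main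
  _ = ∑' k : ℕ, (lam (φ ((e k) : ℕ)))⁻¹ := tsum_congr fun k => rfl
  _ = ∑' n : {m : ℕ // n₀ < m}, (lam (φ n.1))⁻¹ :=
      Equiv.tsum_eq e fun n => (lam (φ n.1))⁻¹
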